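/- A matrix scheme (Θ, D) contains uncertainty (i.e., the projection of preference of consequences is not unique) if and only if there exist d₁, d₂ ∈ D and θ, θ' ∈ Θ such that d₁(θ) < d₂(θ) and d₂(θ') < d₁(θ'). -/

import Mathlib

/-- Given `d₁ d₂ : Θ → ℝ` incomparable, the pointwise order on `D` augmented by
`d₁ ≤ d₂` (with all transitive consequences) is a partial order. -/
private lemma aux_partial {Θ : Type*} {D : Set (Θ → ℝ)} {d₁ d₂ : Θ → ℝ}
    {θ : Θ} (h : d₁ θ < d₂ θ) :
    IsPartialOrder D (fun a b =>
      (∀ t, a.1 t ≤ b.1 t) ∨ ((∀ t, a.1 t ≤ d₁ t) ∧ (∀ t, d₂ t ≤ b.1 t))) := by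
  refine { refl := ?_, trans := ?_, antisymm := ?_ }
  · intro a; exact Or.inl fun t => le_refl _
  · intro a b c hab hbc
    rcases hab with hab | ⟨ha, hb⟩
    · rcases hbc with hbc | ⟨hb, hc⟩
      · exact Or.inl fun t => le_trans (hab t) (hbc t)
      · exact Or.inr ⟨fun t => le_trans (hab t) (hb t), hc⟩
    · rcases hbc with hbc | ⟨hb', hc⟩
      · exact Or.inr ⟨ha, fun t => le_trans (hb t) (hbc t)⟩
      · exact absurd (le_trans (hb θ) (hb' θ)) (not_le.mpr h)
  · intro a b hab hba
    have key : ∀ t, a.1 t = b.1 t := by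
      rcases hab with hab | ⟨ha, hb⟩
      · rcases hba with hba | ⟨hb', ha'⟩
        · exact fun t => le_antisymm (hab t) (hba t)
        · exact absurd (le_trans (ha' θ) (le_trans (hab θ) (hb' θ))) (not_le.mpr h)
      · rcases hba with hba | ⟨hb', ha'⟩
        · exact absurd (le_trans (hb θ) (le_trans (hba θ) (ha θ))) (not_le.mpr h)
        · exact absurd (le_trans (hb θ) (hb' θ)) (not_le.mpr h)
    exact Subtype.ext (funext key)

/-- From the augmented order, build a projection with `d₁ ≺ d₂`. -/
private lemma aux_proj {Θ : Type*} {D : Set (Θ → ℝ)} {d₁ d₂ : Θ → ℝ}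
    (h₁ : d₁ ∈ D) (h₂ : d₂ ∈ D) {θ : Θ} (h : d₁ θ < d₂ θ)
    (Dom : D → D → Prop)
    (hDom : ∀ a b : D, Dom a b ↔ ((∀ t, a.1 t ≤ b.1 t) ∧ ∃ t, a.1 t < b.1 t)) :
    ∃ P : D → D → Prop,
      ((∀ a b, P a b → ¬ P b a) ∧
       (∀ a b c, ¬ P a b → ¬ P b c → ¬ P a c) ∧
       (∀ a b, Dom a b → P a b)) ∧ P ⟨d₁, h₁⟩ ⟨d₂, h₂⟩ := by
  haveI := aux_partial (D := D) h
  obtain ⟨s, hs, hrs⟩ := extend_partialOrder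
    (fun a b : D => (∀ t, a.1 t ≤ b.1 t) ∨ ((∀ t, a.1 t ≤ d₁ t) ∧ (∀ t, d₂ t ≤ b.1 t)))
  haveI := hs
  refine ⟨fun a b => s a b ∧ a ≠ b, ⟨?_, ?_, ?_⟩, ?_⟩
  · rintro a b ⟨hab, hne⟩ ⟨hba, -⟩
    exact hne (Std.Antisymm.antisymm _ _ hab hba)
  · intro a b c hab hbc ⟨hac, hne⟩
    have hnot : ∀ x y : D, ¬ (s x y ∧ x ≠ y) → s y x := by
      intro x y hxy
      by_cases hxyeq : x = y
      · subst hxyeq; exact Std.Refl.refl x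
      · rcases Std.Total.total (r := s) x y with h' | h'
        · exact absurd ⟨h', hxyeq⟩ hxy
        · exact h'
      
    exact hne (Std.Antisymm.antisymm _ _ hac (IsTrans.trans _ _ _ (hnot b c hbc) (hnot a b hab)))
  · intro a b hab
    obtain ⟨hle, t, hlt⟩ := (hDom a b).mp hab
    refine ⟨hrs a b (Or.inl hle), fun hEq => ?_⟩
    rw [hEq] at hlt; exact lt_irrefl _ hlt
  · refine ⟨hrs _ _ (Or.inr ⟨fun t => le_refl _, fun t => le_refl _⟩), fun hEq => ?_⟩
    have := congrFun (congrArg Subtype.val hEq) θ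
    simp only at this
    rw [this] at h; exact lt_irrefl _ h

/-- A matrix scheme `(Θ, D)` contains uncertainty (the projection of preference of
consequences is not unique) iff there are `d₁ d₂ ∈ D` and `θ, θ'` with
`d₁ θ < d₂ θ` and `d₂ θ' < d₁ θ'`. -/
theorem uncertainty_iff {Θ : Type*} (D : Set (Θ → ℝ))
    (Dom : D → D → Prop)
    (hDom : ∀ a b : D, Dom a b ↔ ((∀ θ, a.1 θ ≤ b.1 θ) ∧ ∃ θ, a.1 θ < b.1 θ)) :
    (∃ P₁ P₂ : D → D → Prop,
      ((∀ a b, P₁ a b → ¬ P₁ b a) ∧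
       (∀ a b c, ¬ P₁ a b → ¬ P₁ b c → ¬ P₁ a c) ∧
       (∀ a b, Dom a b → P₁ a b)) ∧
      ((∀ a b, P₂ a b → ¬ P₂ b a) ∧
       (∀ a b c, ¬ P₂ a b → ¬ P₂ b c → ¬ P₂ a c) ∧
       (∀ a b, Dom a b → P₂ a b)) ∧
      P₁ ≠ P₂) ↔
    (∃ d₁ ∈ D, ∃ d₂ ∈ D, ∃ θ θ' : Θ, d₁ θ < d₂ θ ∧ d₂ θ' < d₁ θ') := by
  constructor
  · rintro ⟨P₁, P₂, hP₁, hP₂, hne⟩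
    by_contra hno
    push_neg at hno
    -- Pointwise order is total on D, so any projection equals Dom.
    have key : ∀ (P : D → D → Prop),
        ((∀ a b, P a b → ¬ P b a) ∧
         (∀ a b c, ¬ P a b → ¬ P b c → ¬ P a c) ∧
         (∀ a b, Dom a b → P a b)) → ∀ a b, P a b → Dom a b := by
      rintro P ⟨hasym, -, hext⟩ a b hab
      by_contra hnd
      by_cases heq : a = b
      · subst heq; exact hasym a a hab hab
      · have htot : (∀ θ, a.1 θ ≤ b.1 θ) ∨ (∀ θ, b.1 θ ≤ a.1 θ) := by
          by_contra hc
          push_neg at hc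
          obtain ⟨θ, hθ⟩ := hc.1
          obtain ⟨θ', hθ'⟩ := hc.2
          exact absurd (hno b.1 b.2 a.1 a.2 θ θ' hθ) (not_le.mpr hθ')
        rcases htot with hle | hle
        · have : ∃ θ, a.1 θ < b.1 θ := by
            by_contra hc
            push_neg at hc
            exact heq (Subtype.ext (funext fun t => le_antisymm (hle t) (hc t)))
          exact hnd ((hDom a b).mpr ⟨hle, this⟩)
        · have : ∃ θ, b.1 θ < a.1 θ := by
            by_contra hc
            push_neg at hc
            exact heq (Subtype.ext (funext fun t => le_antisymm (hc t) (hle t)))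
          exact hasym a b hab (hext b a ((hDom b a).mpr ⟨hle, this⟩))
    apply hne
    funext a b
    ext
    constructor
    · intro h; exact hP₂.2.2 a b (key P₁ hP₁ a b h)
    · intro h; exact hP₁.2.2 a b (key P₂ hP₂ a b h)
  · rintro ⟨d₁, h₁, d₂, h₂, θ, θ', hlt, hlt'⟩
    obtain ⟨P₁, hP₁, hP₁ord⟩ := aux_proj h₁ h₂ hlt Dom hDom
    obtain ⟨P₂, hP₂, hP₂ord⟩ := aux_proj h₂ h₁ hlt' Dom hDom
    refine ⟨P₁, P₂, hP₁, hP₂, fun hEq => ?_⟩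
    exact hP₂.1 _ _ hP₂ord (hEq ▸ hP₁ord)
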